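/- Let I be an open interval and f, g : I → ℝ be C² functions with nowhere vanishing first derivatives. Then A_f(a) ≤ A_g(a) for all n and all a ∈ I^n if and only if f″(t)/f′(t) ≤ g″(t)/g′(t) for all t ∈ I. -/

import Mathlib

open Set Function

/-- The `n`-variable quasiarithmetic mean on `I` generated by `f`. -/
noncomputable def QAMean (I : Set ℝ) (f : ℝ → ℝ) {n : ℕ} (a : Fin n → ℝ) : ℝ :=
  Function.invFunOn f I ((∑ i, f (a i)) / n)

namespace Stmt14Aux

variable {I : Set ℝ} {f g : ℝ → ℝ}

lemma image_convex (hIcv : Convex ℝ I) (hfc : ContinuousOn f I) : Convex ℝ (f '' I) :=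
  convex_iff_ordConnected.mpr ((hIcv.isPreconnected).image f hfc).ordConnected

lemma mean_mem (hIcv : Convex ℝ I) (hfc : ContinuousOn f I) {n : ℕ} (a : Fin (n + 1) → ℝ)
    (ha : ∀ i, a i ∈ I) : (∑ i, f (a i)) / ((n + 1 : ℕ) : ℝ) ∈ f '' I := by
  have hconv := image_convex hIcv hfc
  have h := hconv.sum_mem (t := Finset.univ) (w := fun _ : Fin (n + 1) => (((n + 1 : ℕ)) : ℝ)⁻¹)
    (z := fun i => f (a i)) (fun i _ => by positivity)
    (by
      rw [Finset.sum_const, Finset.card_univ, Fintype.card_fin, nsmul_eq_mul]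
      field_simp)
    (fun i _ => ⟨a i, ha i, rfl⟩)
  have he : ∑ i, (((n + 1 : ℕ)) : ℝ)⁻¹ • f (a i) = (∑ i, f (a i)) / ((n + 1 : ℕ) : ℝ) := by
    rw [div_eq_inv_mul, Finset.mul_sum]
    simp [smul_eq_mul]
  rwa [he] at h

lemma qamean_unfold {n : ℕ} (a : Fin (n + 1) → ℝ) :
    QAMean I f a = Function.invFunOn f I ((∑ i, f (a i)) / ((n + 1 : ℕ) : ℝ)) := rfl

lemma qamean_mem {n : ℕ} {a : Fin (n + 1) → ℝ}
    (hm : (∑ i, f (a i)) / ((n + 1 : ℕ) : ℝ) ∈ f '' I) : QAMean I f a ∈ I := by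
  obtain ⟨c, hc, hfc⟩ := hm
  exact Function.invFunOn_mem ⟨c, hc, hfc⟩

lemma qamean_map {n : ℕ} {a : Fin (n + 1) → ℝ}
    (hm : (∑ i, f (a i)) / ((n + 1 : ℕ) : ℝ) ∈ f '' I) :
    f (QAMean I f a) = (∑ i, f (a i)) / ((n + 1 : ℕ) : ℝ) := by
  obtain ⟨c, hc, hfc⟩ := hm
  exact Function.invFunOn_eq ⟨c, hc, hfc⟩

/-- Core version: both generating functions strictly increasing. -/
lemma core (I : Set ℝ) (hIop : IsOpen I) (hIcv : Convex ℝ I)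
    (f g : ℝ → ℝ)
    (hf : ContDiffOn ℝ 2 f I) (hf' : ∀ x ∈ I, 0 < deriv f x)
    (hg : ContDiffOn ℝ 2 g I) (hg' : ∀ x ∈ I, 0 < deriv g x) :
    (∀ n : ℕ, ∀ a : Fin (n + 1) → ℝ, (∀ i, a i ∈ I) →
        QAMean I f a ≤ QAMean I g a) ↔
    (∀ t ∈ I, deriv (deriv f) t / deriv f t ≤ deriv (deriv g) t / deriv g t) := by
  have hfc : ContinuousOn f I := hf.continuousOn
  have hgc : ContinuousOn g I := hg.continuousOn
  have hf1 : ContDiffOn ℝ 1 (deriv f) I := hf.deriv_of_isOpen hIop (by norm_num)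
  have hg1 : ContDiffOn ℝ 1 (deriv g) I := hg.deriv_of_isOpen hIop (by norm_num)
  have hfd : DifferentiableOn ℝ f I := hf.differentiableOn (by norm_num)
  have hgd : DifferentiableOn ℝ g I := hg.differentiableOn (by norm_num)
  have hf'd : DifferentiableOn ℝ (deriv f) I := hf1.differentiableOn (by norm_num)
  have hg'd : DifferentiableOn ℝ (deriv g) I := hg1.differentiableOn (by norm_num)
  have hf'c : ContinuousOn (deriv f) I := hf1.continuousOn
  have hg'c : ContinuousOn (deriv g) I := hg1.continuousOn
  have sMf : StrictMonoOn f I :=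
    strictMonoOn_of_deriv_pos hIcv hfc (by rw [hIop.interior_eq]; exact hf')
  have sMg : StrictMonoOn g I :=
    strictMonoOn_of_deriv_pos hIcv hgc (by rw [hIop.interior_eq]; exact hg')
  constructor
  · -- means comparison → derivative inequality
    intro hmeans t ht
    by_contra hcon
    push_neg at hcon
    set D : ℝ → ℝ := fun x => deriv (deriv f) x * deriv g x - deriv (deriv g) x * deriv f x
      with hD
    have hDt : 0 < D t := by
      have := (div_lt_div_iff₀ (hg' t ht) (hf' t ht)).1 hcon
      simp only [hD]
      nlinarith
    have hDc : ContinuousOn D I :=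
      ((hf1.continuousOn_deriv_of_isOpen hIop le_rfl).mul hg'c).sub
        ((hg1.continuousOn_deriv_of_isOpen hIop le_rfl).mul hf'c)
    have hDat : ContinuousAt D t := hDc.continuousAt (hIop.mem_nhds ht)
    have hev0 : ∀ᶠ x in nhds t, D x ∈ Ioi 0 := hDat (Ioi_mem_nhds hDt)
    have hev : ∀ᶠ x in nhds t, 0 < D x ∧ x ∈ I :=
      (hev0.mono fun x hx => hx).and (hIop.eventually_mem ht)
    obtain ⟨ε, hε, hball⟩ := Metric.eventually_nhds_iff_ball.1 hev
    set B := Metric.ball t ε with hBdef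
    have hBI : B ⊆ I := fun x hx => (hball x hx).2
    have hBcv : Convex ℝ B := convex_ball t ε
    set a := t - ε / 2 with hadef
    set b := t + ε / 2 with hbdef
    have haB : a ∈ B := by
      simp only [hBdef, Metric.mem_ball, hadef, Real.dist_eq]
      rw [abs_of_nonpos (by linarith)]
      linarith
    have hbB : b ∈ B := by
      simp only [hBdef, Metric.mem_ball, hbdef, Real.dist_eq]
      rw [abs_of_nonneg (by linarith)]
      linarith
    have hab : a < b := by simp only [hadef, hbdef]; linarith
    -- f'/g' is strictly monotone on B
    have sMq : StrictMonoOn (fun x => deriv f x / deriv g x) B := by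
      apply strictMonoOn_of_deriv_pos hBcv
        ((hf'c.mono hBI).div (hg'c.mono hBI) fun x hx => (hg' x (hBI hx)).ne')
      rw [Metric.isOpen_ball.interior_eq]
      intro x hx
      have hdd : HasDerivAt (fun y => deriv f y / deriv g y)
          ((deriv (deriv f) x * deriv g x - deriv f x * deriv (deriv g) x) / deriv g x ^ 2) x :=
        HasDerivAt.div ((hf'd.differentiableAt (hIop.mem_nhds (hBI hx))).hasDerivAt)
          ((hg'd.differentiableAt (hIop.mem_nhds (hBI hx))).hasDerivAt)
          (hg' x (hBI hx)).ne'
      show 0 < deriv (fun y => deriv f y / deriv g y) x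
      rw [hdd.deriv]
      have h1 := (hball x hx).1
      have h2 := hg' x (hBI hx)
      apply div_pos _ (by positivity)
      simp only [hD] at h1
      nlinarith
    -- the g-midpoint c of a, b
    set m : ℝ := (g a + g b) / 2 with hmdef
    have hgab : g a < g b := sMg (hBI haB) (hBI hbB) hab
    have hmIm : m ∈ g '' B := by
      have := image_convex hBcv (hgc.mono hBI)
      exact this.ordConnected.out ⟨a, haB, rfl⟩ ⟨b, hbB, rfl⟩
        ⟨by rw [hmdef]; linarith, by rw [hmdef]; linarith⟩
    obtain ⟨c₀, hc₀B, hc₀m⟩ := hmIm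
    set c := Function.invFunOn g I m with hcdef
    have hcI : c ∈ I := Function.invFunOn_mem ⟨c₀, hBI hc₀B, hc₀m⟩
    have hgc_eq : g c = m := Function.invFunOn_eq ⟨c₀, hBI hc₀B, hc₀m⟩
    have hcB : c ∈ B := by
      have : c = c₀ := sMg.injOn hcI (hBI hc₀B) (by rw [hgc_eq, hc₀m])
      rw [this]; exact hc₀B
    have hac : a < c := (sMg.lt_iff_lt (hBI haB) hcI).1 (by rw [hgc_eq, hmdef]; linarith)
    have hcb : c < b := (sMg.lt_iff_lt hcI (hBI hbB)).1 (by rw [hgc_eq, hmdef]; linarith)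
    -- two Cauchy MVTs
    have hIccacB : Icc a c ⊆ B := hBcv.ordConnected.out haB hcB
    have hIcccbB : Icc c b ⊆ B := hBcv.ordConnected.out hcB hbB
    obtain ⟨ξ₁, hξ₁, heq₁⟩ :=
      exists_ratio_deriv_eq_ratio_slope g hac ((hgc.mono hBI).mono hIccacB)
        ((hgd.mono hBI).mono ((Ioo_subset_Icc_self).trans hIccacB)) f
        ((hfc.mono hBI).mono hIccacB)
        ((hfd.mono hBI).mono ((Ioo_subset_Icc_self).trans hIccacB))
    obtain ⟨ξ₂, hξ₂, heq₂⟩ :=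
      exists_ratio_deriv_eq_ratio_slope g hcb ((hgc.mono hBI).mono hIcccbB)
        ((hgd.mono hBI).mono ((Ioo_subset_Icc_self).trans hIcccbB)) f
        ((hfc.mono hBI).mono hIcccbB)
        ((hfd.mono hBI).mono ((Ioo_subset_Icc_self).trans hIcccbB))
    -- heq₁ : (f c - f a) * deriv g ξ₁ = (g c - g a) * deriv f ξ₁
    have hξ₁B : ξ₁ ∈ B := hIccacB (Ioo_subset_Icc_self hξ₁)
    have hξ₂B : ξ₂ ∈ B := hIcccbB (Ioo_subset_Icc_self hξ₂)
    have hd : g c - g a = (g b - g a) / 2 := by rw [hgc_eq, hmdef]; ring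
    have hd' : g b - g c = (g b - g a) / 2 := by rw [hgc_eq, hmdef]; ring
    have hdpos : 0 < (g b - g a) / 2 := by linarith
    have hg₁ : 0 < deriv g ξ₁ := hg' _ (hBI hξ₁B)
    have hg₂ : 0 < deriv g ξ₂ := hg' _ (hBI hξ₂B)
    have hqlt : deriv f ξ₁ / deriv g ξ₁ < deriv f ξ₂ / deriv g ξ₂ :=
      sMq hξ₁B hξ₂B (lt_trans hξ₁.2 hξ₂.1)
    have key : 2 * f c < f a + f b := by
      have e₁ : f c - f a = (g b - g a) / 2 * deriv f ξ₁ / deriv g ξ₁ := by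
        rw [eq_div_iff hg₁.ne', ← hd]
        exact heq₁
      have e₂ : f b - f c = (g b - g a) / 2 * deriv f ξ₂ / deriv g ξ₂ := by
        rw [eq_div_iff hg₂.ne', ← hd']
        exact heq₂
      have e₃ : (g b - g a) / 2 * deriv f ξ₁ / deriv g ξ₁
          < (g b - g a) / 2 * deriv f ξ₂ / deriv g ξ₂ := by
        rw [mul_div_assoc, mul_div_assoc]
        exact mul_lt_mul_of_pos_left hqlt hdpos
      linarith
    -- compare with the assumed mean inequality for the pair (a, b)
    have hpair : ∀ i, (![a, b] : Fin 2 → ℝ) i ∈ I := by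
      intro i
      fin_cases i
      · exact hBI haB
      · exact hBI hbB
    have hmf2 : (∑ i, f ((![a, b] : Fin 2 → ℝ) i)) / ((1 + 1 : ℕ) : ℝ) ∈ f '' I :=
      mean_mem hIcv hfc _ hpair
    have hmg2 : (∑ i, g ((![a, b] : Fin 2 → ℝ) i)) / ((1 + 1 : ℕ) : ℝ) ∈ g '' I :=
      mean_mem hIcv hgc _ hpair
    have hsumf : (∑ i, f ((![a, b] : Fin 2 → ℝ) i)) / ((1 + 1 : ℕ) : ℝ) = (f a + f b) / 2 := by
      norm_num [Fin.sum_univ_two]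
    have hsumg : (∑ i, g ((![a, b] : Fin 2 → ℝ) i)) / ((1 + 1 : ℕ) : ℝ) = m := by
      rw [hmdef]
      norm_num [Fin.sum_univ_two]
    have hQf_mem : QAMean I f (![a, b] : Fin 2 → ℝ) ∈ I := qamean_mem hmf2
    have hQf_map : f (QAMean I f (![a, b] : Fin 2 → ℝ)) = (f a + f b) / 2 := by
      rw [qamean_map hmf2, hsumf]
    have hQg_eq : QAMean I g (![a, b] : Fin 2 → ℝ) = c := by
      rw [qamean_unfold, hsumg, hcdef]
    have hle := hmeans 1 (![a, b] : Fin 2 → ℝ) hpair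
    rw [hQg_eq] at hle
    -- but f c < (f a + f b)/2 = f (QAMean f), so c < QAMean f
    have : c < QAMean I f (![a, b] : Fin 2 → ℝ) := by
      apply (sMf.lt_iff_lt hcI hQf_mem).1
      rw [hQf_map]
      linarith
    linarith
  · -- derivative inequality → means comparison
    intro hcmp n a ha
    have hinjf : InjOn f I := sMf.injOn
    -- g'/f' is monotone on I
    have hmono : MonotoneOn (fun x => deriv g x / deriv f x) I := by
      apply monotoneOn_of_deriv_nonneg hIcv
        (hg'c.div hf'c fun x hx => (hf' x hx).ne')
      · rw [hIop.interior_eq]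
        intro x hx
        exact ((hg'd x hx).div (hf'd x hx) (hf' x hx).ne')
      · rw [hIop.interior_eq]
        intro x hx
        have hdd : HasDerivAt (fun y => deriv g y / deriv f y)
            ((deriv (deriv g) x * deriv f x - deriv g x * deriv (deriv f) x) / deriv f x ^ 2) x :=
          HasDerivAt.div ((hg'd.differentiableAt (hIop.mem_nhds hx)).hasDerivAt)
            ((hf'd.differentiableAt (hIop.mem_nhds hx)).hasDerivAt)
            (hf' x hx).ne'
        show 0 ≤ deriv (fun y => deriv g y / deriv f y) x
        rw [hdd.deriv]
        have h1 := (div_le_div_iff₀ (hf' x hx) (hg' x hx)).1 (hcmp x hx)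
        have h2 := hf' x hx
        have h3 := hg' x hx
        apply div_nonneg _ (by positivity)
        nlinarith
    -- φ = g ∘ f⁻¹ is convex on J = f '' I
    set J := f '' I with hJdef
    have hJcv : Convex ℝ J := image_convex hIcv hfc
    set φ : ℝ → ℝ := fun y => g (Function.invFunOn f I y) with hφdef
    have hφval : ∀ x ∈ I, φ (f x) = g x := by
      intro x hx
      simp only [hφdef]
      congr 1
      exact hinjf (Function.invFunOn_apply_mem hx) hx (Function.invFunOn_apply_eq hx)
    have hφcv : ConvexOn ℝ J φ := by
      apply convexOn_of_slope_mono_adjacent hJcv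
      intro x y z hx hz hxy hyz
      have hy : y ∈ J := hJcv.ordConnected.out hx hz ⟨hxy.le, (le_of_lt hyz)⟩
      obtain ⟨A, hA, hfA⟩ := hx
      obtain ⟨Bp, hB, hfB⟩ := hy
      obtain ⟨C, hC, hfC⟩ := hz
      have hAB : A < Bp := (sMf.lt_iff_lt hA hB).1 (by rw [hfA, hfB]; exact hxy)
      have hBC : Bp < C := (sMf.lt_iff_lt hB hC).1 (by rw [hfB, hfC]; exact hyz)
      have hIccAB : Icc A Bp ⊆ I := hIcv.ordConnected.out hA hB
      have hIccBC : Icc Bp C ⊆ I := hIcv.ordConnected.out hB hC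
      obtain ⟨ξ₁, hξ₁, heq₁⟩ :=
        exists_ratio_deriv_eq_ratio_slope f hAB (hfc.mono hIccAB)
          (hfd.mono ((Ioo_subset_Icc_self).trans hIccAB)) g (hgc.mono hIccAB)
          (hgd.mono ((Ioo_subset_Icc_self).trans hIccAB))
      obtain ⟨ξ₂, hξ₂, heq₂⟩ :=
        exists_ratio_deriv_eq_ratio_slope f hBC (hfc.mono hIccBC)
          (hfd.mono ((Ioo_subset_Icc_self).trans hIccBC)) g (hgc.mono hIccBC)
          (hgd.mono ((Ioo_subset_Icc_self).trans hIccBC))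
      -- heq₁ : (g Bp - g A) * deriv f ξ₁ = (f Bp - f A) * deriv g ξ₁
      have hξ₁I : ξ₁ ∈ I := hIccAB (Ioo_subset_Icc_self hξ₁)
      have hξ₂I : ξ₂ ∈ I := hIccBC (Ioo_subset_Icc_self hξ₂)
      have hf₁ : 0 < deriv f ξ₁ := hf' _ hξ₁I
      have hf₂ : 0 < deriv f ξ₂ := hf' _ hξ₂I
      have hfAB : 0 < f Bp - f A := sub_pos.2 (sMf hA hB hAB)
      have hfBC : 0 < f C - f Bp := sub_pos.2 (sMf hB hC hBC)
      have hs₁ : (g Bp - g A) / (f Bp - f A) = deriv g ξ₁ / deriv f ξ₁ := by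
        rw [div_eq_div_iff hfAB.ne' hf₁.ne']
        linarith [heq₁]
      have hs₂ : (g C - g Bp) / (f C - f Bp) = deriv g ξ₂ / deriv f ξ₂ := by
        rw [div_eq_div_iff hfBC.ne' hf₂.ne']
        linarith [heq₂]
      have hchain : deriv g ξ₁ / deriv f ξ₁ ≤ deriv g ξ₂ / deriv f ξ₂ :=
        hmono hξ₁I hξ₂I (le_of_lt (lt_trans hξ₁.2 hξ₂.1))
      calc (φ y - φ x) / (y - x) = (g Bp - g A) / (f Bp - f A) := by
            rw [← hfA, ← hfB, hφval A hA, hφval Bp hB]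
        _ ≤ (g C - g Bp) / (f C - f Bp) := by rw [hs₁, hs₂]; exact hchain
        _ = (φ z - φ y) / (z - y) := by rw [← hfB, ← hfC, hφval Bp hB, hφval C hC]
    -- Jensen
    have hw : ∑ _i : Fin (n + 1), (((n + 1 : ℕ)) : ℝ)⁻¹ = 1 := by
      rw [Finset.sum_const, Finset.card_univ, Fintype.card_fin, nsmul_eq_mul]
      field_simp
    have hjensen := hφcv.map_sum_le (t := Finset.univ)
      (w := fun _ : Fin (n + 1) => (((n + 1 : ℕ)) : ℝ)⁻¹) (p := fun i => f (a i))
      (fun i _ => by positivity) hw (fun i _ => ⟨a i, ha i, rfl⟩)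
    have hsum1 : ∑ i : Fin (n + 1), (((n + 1 : ℕ)) : ℝ)⁻¹ • f (a i)
        = (∑ i, f (a i)) / ((n + 1 : ℕ) : ℝ) := by
      rw [div_eq_inv_mul, Finset.mul_sum]
      simp [smul_eq_mul]
    have hsum2 : ∑ i : Fin (n + 1), (((n + 1 : ℕ)) : ℝ)⁻¹ • φ (f (a i))
        = (∑ i, g (a i)) / ((n + 1 : ℕ) : ℝ) := by
      rw [div_eq_inv_mul, Finset.mul_sum]
      apply Finset.sum_congr rfl
      intro i _
      rw [smul_eq_mul, hφval (a i) (ha i)]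
    rw [hsum1, hsum2] at hjensen
    have hmf : (∑ i, f (a i)) / ((n + 1 : ℕ) : ℝ) ∈ f '' I := mean_mem hIcv hfc a ha
    have hmg : (∑ i, g (a i)) / ((n + 1 : ℕ) : ℝ) ∈ g '' I := mean_mem hIcv hgc a ha
    have hφQ : φ ((∑ i, f (a i)) / ((n + 1 : ℕ) : ℝ)) = g (QAMean I f a) := rfl
    rw [hφQ, ← qamean_map hmg] at hjensen
    exact (sMg.le_iff_le (qamean_mem hmf) (qamean_mem hmg)).1 hjensen

lemma sign_dichotomy (hIcv : Convex ℝ I) (hfc' : ContinuousOn (deriv f) I)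
    (hf' : ∀ x ∈ I, deriv f x ≠ 0) :
    (∀ x ∈ I, 0 < deriv f x) ∨ (∀ x ∈ I, deriv f x < 0) := by
  by_contra h
  push_neg at h
  obtain ⟨⟨x, hx, hxle⟩, ⟨y, hy, hyle⟩⟩ := h
  have hpre : IsPreconnected (deriv f '' I) := (hIcv.isPreconnected).image _ hfc'
  have h0 : (0 : ℝ) ∈ deriv f '' I :=
    hpre.ordConnected.out ⟨x, hx, rfl⟩ ⟨y, hy, rfl⟩ ⟨hxle, hyle⟩
  obtain ⟨z, hz, hz0⟩ := h0
  exact hf' z hz hz0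

lemma qamean_neg (hinj : InjOn f I) {n : ℕ} (a : Fin (n + 1) → ℝ)
    (hm : (∑ i, f (a i)) / ((n + 1 : ℕ) : ℝ) ∈ f '' I) :
    QAMean I (fun x => -f x) a = QAMean I f a := by
  obtain ⟨c, hcI, hc⟩ := hm
  set m := (∑ i, f (a i)) / ((n + 1 : ℕ) : ℝ) with hmdef
  have harg : QAMean I (fun x => -f x) a = Function.invFunOn (fun x => -f x) I (-m) := by
    rw [qamean_unfold]
    congr 1
    rw [hmdef, ← neg_div, ← Finset.sum_neg_distrib]
  rw [harg, qamean_unfold, ← hmdef]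
  have hex : ∃ u ∈ I, -f u = -m := ⟨c, hcI, by rw [hc]⟩
  have hu1 : Function.invFunOn (fun x => -f x) I (-m) ∈ I := Function.invFunOn_mem hex
  have hu2 : -f (Function.invFunOn (fun x => -f x) I (-m)) = -m := Function.invFunOn_eq hex
  have hv1 : Function.invFunOn f I m ∈ I := Function.invFunOn_mem ⟨c, hcI, hc⟩
  have hv2 : f (Function.invFunOn f I m) = m := Function.invFunOn_eq ⟨c, hcI, hc⟩
  exact hinj hu1 hv1 (by rw [hv2]; exact neg_injective hu2)

lemma neg_ratio (f : ℝ → ℝ) (t : ℝ) :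
    deriv (deriv (fun x => -f x)) t / deriv (fun x => -f x) t
      = deriv (deriv f) t / deriv f t := by
  have h1 : (deriv fun x => -f x) = fun x => -deriv f x := deriv.neg'
  simp only [h1, deriv.fun_neg]
  exact neg_div_neg_eq _ _

lemma injOn_of_deriv_ne (hIop : IsOpen I) (hIcv : Convex ℝ I) (hfc : ContinuousOn f I)
    (hfc' : ContinuousOn (deriv f) I) (hf' : ∀ x ∈ I, deriv f x ≠ 0) : InjOn f I := by
  rcases sign_dichotomy hIcv hfc' hf' with h | h
  · exact (strictMonoOn_of_deriv_pos hIcv hfc (by rw [hIop.interior_eq]; exact h)).injOn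
  · exact (strictAntiOn_of_deriv_neg hIcv hfc (by rw [hIop.interior_eq]; exact h)).injOn

/-- Version with `g` strictly increasing, `f` arbitrary. -/
lemma core2 (I : Set ℝ) (hIop : IsOpen I) (hIcv : Convex ℝ I)
    (f g : ℝ → ℝ)
    (hf : ContDiffOn ℝ 2 f I) (hf' : ∀ x ∈ I, deriv f x ≠ 0)
    (hg : ContDiffOn ℝ 2 g I) (hg' : ∀ x ∈ I, 0 < deriv g x) :
    (∀ n : ℕ, ∀ a : Fin (n + 1) → ℝ, (∀ i, a i ∈ I) →
        QAMean I f a ≤ QAMean I g a) ↔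
    (∀ t ∈ I, deriv (deriv f) t / deriv f t ≤ deriv (deriv g) t / deriv g t) := by
  have hfc : ContinuousOn f I := hf.continuousOn
  have hf1 : ContDiffOn ℝ 1 (deriv f) I := hf.deriv_of_isOpen hIop (by norm_num)
  have hf'c : ContinuousOn (deriv f) I := hf1.continuousOn
  rcases sign_dichotomy hIcv hf'c hf' with hpos | hneg
  · exact core I hIop hIcv f g hf hpos hg hg'
  · -- use -f
    have hinjf : InjOn f I := injOn_of_deriv_ne hIop hIcv hfc hf'c hf'
    have hFpos : ∀ x ∈ I, 0 < deriv (fun x => -f x) x := by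
      intro x hx
      rw [deriv.fun_neg]
      exact neg_pos.2 (hneg x hx)
    have hcore := core I hIop hIcv (fun x => -f x) g hf.neg hFpos hg hg'
    constructor
    · intro h t ht
      rw [← neg_ratio f t]
      apply hcore.1 _ t ht
      intro n a ha
      rw [qamean_neg hinjf a (mean_mem hIcv hfc a ha)]
      exact h n a ha
    · intro h n a ha
      rw [← qamean_neg hinjf a (mean_mem hIcv hfc a ha)]
      apply hcore.2 _ n a ha
      intro t ht
      rw [neg_ratio f t]
      exact h t ht

end Stmt14Aux

open Stmt14Aux in
theorem stmt_14 (I : Set ℝ) (hIop : IsOpen I) (hIcv : Convex ℝ I)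
    (f g : ℝ → ℝ)
    (hf : ContDiffOn ℝ 2 f I) (hf' : ∀ x ∈ I, deriv f x ≠ 0)
    (hg : ContDiffOn ℝ 2 g I) (hg' : ∀ x ∈ I, deriv g x ≠ 0) :
    (∀ n : ℕ, ∀ a : Fin (n + 1) → ℝ, (∀ i, a i ∈ I) →
        QAMean I f a ≤ QAMean I g a) ↔
    (∀ t ∈ I, deriv (deriv f) t / deriv f t ≤ deriv (deriv g) t / deriv g t) := by
  have hgc : ContinuousOn g I := hg.continuousOn
  have hg1 : ContDiffOn ℝ 1 (deriv g) I := hg.deriv_of_isOpen hIop (by norm_num)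
  have hg'c : ContinuousOn (deriv g) I := hg1.continuousOn
  rcases sign_dichotomy hIcv hg'c hg' with hpos | hneg
  · exact core2 I hIop hIcv f g hf hf' hg hpos
  · -- use -g
    have hinjg : InjOn g I := injOn_of_deriv_ne hIop hIcv hgc hg'c hg'
    have hGpos : ∀ x ∈ I, 0 < deriv (fun x => -g x) x := by
      intro x hx
      rw [deriv.fun_neg]
      exact neg_pos.2 (hneg x hx)
    have hcore := core2 I hIop hIcv f (fun x => -g x) hf hf' hg.neg hGpos
    constructor
    · intro h t ht
      rw [← neg_ratio g t]
      apply hcore.1 _ t ht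
      intro n a ha
      rw [qamean_neg hinjg a (mean_mem hIcv hgc a ha)]
      exact h n a ha
    · intro h n a ha
      rw [← qamean_neg hinjg a (mean_mem hIcv hgc a ha)]
      apply hcore.2 _ n a ha
      intro t ht
      rw [neg_ratio g t]
      exact h t ht
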